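/- Fix δ > −1. For every i ≥ 1, Σ_{m=i+1}^∞ ((m+δ)/(2+δ)) (b_1^{(i)})² p_m = (Γ(3+2δ) / (Γ(2+δ) (Γ(1+δ))²)) · Γ(i+2+δ) (Γ(i+δ))² / (Γ(i+3+2δ) ((i−1)!)²); in particular the series on the left converges. -/

import Mathlib

open Finset

/-- `bcoef δ k j` is `b_j^{(k)} = (−1)^{k−j} Γ(k+δ)/((k−j)! Γ(j+δ))` for `j ≤ k`,
with the convention `b_j^{(k)} = 0` for `j > k`. -/
noncomputable def bcoef (δ : ℝ) (k j : ℕ) : ℝ :=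
  if j ≤ k then
    (-1 : ℝ) ^ (k - j) * Real.Gamma (k + δ) / ((Nat.factorial (k - j)) * Real.Gamma (j + δ))
  else 0

/-- `pk δ k` is the limiting degree frequency
`p_k = c(δ) Γ(k+δ)/Γ(k+3+2δ)` with `c(δ) = (2+δ)Γ(3+2δ)/Γ(1+δ)`, and `p_0 = 0`. -/
noncomputable def pk (δ : ℝ) (k : ℕ) : ℝ :=
  if k = 0 then 0
  else (2 + δ) * Real.Gamma (3 + 2 * δ) / Real.Gamma (1 + δ)
    * Real.Gamma (k + δ) / Real.Gamma (k + 3 + 2 * δ)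

private lemma htn_gen (c a G1 G2 : ℝ) (h0 : c ≠ 0) (ha : a ≠ 0) (h2 : G2 ≠ 0) :
    G1 / (a * G2) = c * (G1 / (c * G2)) / a := by
  field_simp

private lemma tele_gen (c b a' G1 G2 : ℝ) (h0 : c ≠ 0) (h4 : a' ≠ 0) (h2 : G2 ≠ 0)
    (hcb : c = a' - b) :
    G1 / (a' * G2) = G1 / (c * G2) - b * G1 / (c * (a' * G2)) := by
  subst hcb; field_simp

/-- For every `i ≥ 1`, the series `∑_{m=i+1}^∞ ((m+δ)/(2+δ)) (b_1^{(i)})² p_m`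
converges and its sum equals
`(Γ(3+2δ)/(Γ(2+δ) Γ(1+δ)²)) Γ(i+2+δ) Γ(i+δ)² / (Γ(i+3+2δ) ((i−1)!)²)`. -/
theorem tail_series_bcoef_pk (δ : ℝ) (hδ : -1 < δ) (i : ℕ) (hi : 1 ≤ i) :
    Summable (fun m : ℕ =>
      if i + 1 ≤ m then ((m : ℝ) + δ) / (2 + δ) * (bcoef δ i 1) ^ 2 * pk δ m else 0) ∧
    (∑' m : ℕ,
        if i + 1 ≤ m then ((m : ℝ) + δ) / (2 + δ) * (bcoef δ i 1) ^ 2 * pk δ m else 0)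
      = Real.Gamma (3 + 2 * δ) / (Real.Gamma (2 + δ) * (Real.Gamma (1 + δ)) ^ 2)
        * (Real.Gamma (i + 2 + δ) * (Real.Gamma (i + δ)) ^ 2
            / (Real.Gamma (i + 3 + 2 * δ) * ((Nat.factorial (i - 1) : ℝ)) ^ 2)) := by

  have h1δ : (0:ℝ) < 1 + δ := by linarith
  set t : ℕ → ℝ := fun n => Real.Gamma ((n:ℝ)+1+δ) / Real.Gamma ((n:ℝ)+3+2*δ) with ht
  set F : ℕ → ℝ := fun n => Real.Gamma ((n:ℝ)+1+δ) / ((1+δ) * Real.Gamma ((n:ℝ)+2+2*δ)) with hF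
  have hx1 : ∀ n : ℕ, (0:ℝ) < (n:ℝ)+1+δ := fun n => by
    have := Nat.cast_nonneg (α := ℝ) n; linarith
  have hx2 : ∀ n : ℕ, (0:ℝ) < (n:ℝ)+2+2*δ := fun n => by
    have := Nat.cast_nonneg (α := ℝ) n; linarith
  have hx3 : ∀ n : ℕ, (0:ℝ) < (n:ℝ)+3+2*δ := fun n => by
    have := Nat.cast_nonneg (α := ℝ) n; linarith
  have htpos : ∀ n, 0 < t n := fun n =>
    div_pos (Real.Gamma_pos_of_pos (hx1 n)) (Real.Gamma_pos_of_pos (hx3 n))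
  have hFpos : ∀ n, 0 < F n := fun n =>
    div_pos (Real.Gamma_pos_of_pos (hx1 n)) (mul_pos h1δ (Real.Gamma_pos_of_pos (hx2 n)))
  -- telescoping identity
  have tele : ∀ n : ℕ, t n = F n - F (n+1) := by
    intro n
    have hG2 : Real.Gamma ((n:ℝ)+2+δ) = ((n:ℝ)+1+δ) * Real.Gamma ((n:ℝ)+1+δ) := by
      rw [show (n:ℝ)+2+δ = ((n:ℝ)+1+δ)+1 by ring, Real.Gamma_add_one (ne_of_gt (hx1 n))]
    have hG3 : Real.Gamma ((n:ℝ)+3+2*δ) = ((n:ℝ)+2+2*δ) * Real.Gamma ((n:ℝ)+2+2*δ) := by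
      rw [show (n:ℝ)+3+2*δ = ((n:ℝ)+2+2*δ)+1 by ring, Real.Gamma_add_one (ne_of_gt (hx2 n))]
    have e1 : ((n+1:ℕ):ℝ)+1+δ = (n:ℝ)+2+δ := by push_cast; ring
    have e2 : ((n+1:ℕ):ℝ)+2+2*δ = (n:ℝ)+3+2*δ := by push_cast; ring
    simp only [ht, hF, e1, e2, hG2, hG3]
    exact tele_gen (1+δ) ((n:ℝ)+1+δ) ((n:ℝ)+2+2*δ) _ _
      h1δ.ne' (hx2 n).ne' (Real.Gamma_pos_of_pos (hx2 n)).ne' (by ring)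
  -- partial sums
  have psum : ∀ n : ℕ, ∑ k ∈ range n, t k = F 0 - F n := by
    intro n
    rw [show (∑ k ∈ range n, t k) = ∑ k ∈ range n, (F k - F (k+1)) from
      Finset.sum_congr rfl fun k _ => tele k]
    exact Finset.sum_range_sub' F n
  have hsummable : Summable t :=
    summable_of_sum_range_le (c := F 0) (fun n => (htpos n).le)
      (fun n => by rw [psum]; have := hFpos n; linarith)
  have hA : Antitone F := antitone_nat_of_succ_le fun n => by
    have h1 := htpos n; have h2 := tele n; linarith
  have hbdd : BddBelow (Set.range F) := ⟨0, by rintro x ⟨n, rfl⟩; exact (hFpos n).le⟩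
  have hFlim : Filter.Tendsto F Filter.atTop (nhds (⨅ n, F n)) := tendsto_atTop_ciInf hA hbdd
  set L := ⨅ n, F n with hLdef
  have hLle : ∀ n, L ≤ F n := fun n => ciInf_le hbdd n
  have hL0 : 0 ≤ L := le_ciInf fun n => (hFpos n).le
  -- L = 0
  have hLzero : L = 0 := by
    by_contra hne
    have hLpos : 0 < L := lt_of_le_of_ne hL0 (Ne.symm hne)
    set K : ℕ := ⌈(2:ℝ)+2*δ⌉₊ with hK
    have hKle : ∀ n : ℕ, (n:ℝ)+2+2*δ ≤ ((n+K:ℕ):ℝ) := by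
      intro n; push_cast
      have := Nat.le_ceil ((2:ℝ)+2*δ); linarith
    have hlow : ∀ n : ℕ, (1+δ)*L / ((n+K:ℕ):ℝ) ≤ t n := by
      intro n
      have htn : t n = (1+δ) * F n / ((n:ℝ)+2+2*δ) := by
        have hG3 : Real.Gamma ((n:ℝ)+3+2*δ) = ((n:ℝ)+2+2*δ) * Real.Gamma ((n:ℝ)+2+2*δ) := by
          rw [show (n:ℝ)+3+2*δ = ((n:ℝ)+2+2*δ)+1 by ring, Real.Gamma_add_one (ne_of_gt (hx2 n))]
        simp only [ht, hF, hG3]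
        exact htn_gen (1+δ) ((n:ℝ)+2+2*δ) _ _ h1δ.ne' (hx2 n).ne'
          (Real.Gamma_pos_of_pos (hx2 n)).ne'
      have hKpos : (0:ℝ) < ((n+K:ℕ):ℝ) := lt_of_lt_of_le (hx2 n) (hKle n)
      rw [htn]
      have h1 : (1+δ)*L ≤ (1+δ) * F n := by
        have := hLle n; nlinarith
      exact div_le_div₀ (mul_nonneg h1δ.le (hFpos n).le) h1 (hx2 n) (hKle n)
    have hs1 : Summable (fun n : ℕ => (1+δ)*L / ((n+K:ℕ):ℝ)) :=
      hsummable.of_nonneg_of_le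
        (fun n => div_nonneg (mul_nonneg h1δ.le hL0) (Nat.cast_nonneg _)) hlow
    have hs2 : Summable (fun n : ℕ => (((n+K:ℕ):ℝ))⁻¹) := by
      have hc : ((1+δ)*L) ≠ 0 := (mul_pos h1δ hLpos).ne'
      simp only [div_eq_mul_inv] at hs1
      exact (summable_mul_left_iff hc).mp hs1
    have hs3 : Summable (fun n : ℕ => ((n:ℕ):ℝ)⁻¹) :=
      (summable_nat_add_iff K).mp hs2
    exact Real.not_summable_natCast_inv hs3
  have hFlim0 : Filter.Tendsto F Filter.atTop (nhds 0) := by rwa [hLzero] at hFlim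
  -- HasSum t (F 0)
  have hhs : HasSum t (F 0) := by
    have h1 : Filter.Tendsto (fun n => ∑ k ∈ range n, t k) Filter.atTop (nhds (F 0)) := by
      have h2 : Filter.Tendsto (fun n => F 0 - F n) Filter.atTop (nhds (F 0 - 0)) :=
        Filter.Tendsto.sub tendsto_const_nhds hFlim0
      simp only [sub_zero] at h2
      exact h2.congr fun n => (psum n).symm
    have h2 := hsummable.hasSum
    have h3 := h2.tendsto_sum_nat
    have h4 := tendsto_nhds_unique h3 h1
    rwa [h4] at h2
  -- shifted HasSum
  have hshift : HasSum (fun n => t (n + (i+1))) (F (i+1)) := by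
    rw [hasSum_nat_add_iff (i+1), psum (i+1)]
    convert hhs using 1
    · rfl
    ring
  -- truncated version
  set s : ℕ → ℝ := fun m => if i + 1 ≤ m then t m else 0 with hsdef
  have hssum : HasSum s (F (i+1)) := by
    have heq : (fun n => s (n + (i+1))) = (fun n => t (n + (i+1))) :=
      funext fun n => if_pos (Nat.le_add_left _ _)
    have h1 : HasSum (fun n => s (n + (i+1))) (F (i+1)) := by rw [heq]; exact hshift
    have h2 := (hasSum_nat_add_iff (i+1)).mp h1
    have hz : ∑ k ∈ range (i+1), s k = 0 :=
      Finset.sum_eq_zero fun k hk => if_neg (by simp at hk; omega)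
    rwa [hz, add_zero] at h2
  -- the constant C
  set C : ℝ := Real.Gamma (3+2*δ) * (Real.Gamma ((i:ℝ)+δ))^2
      / (((Nat.factorial (i-1)):ℝ)^2 * (Real.Gamma (1+δ))^3) with hC
  have hfact : ((Nat.factorial (i-1) : ℕ):ℝ) ≠ 0 := by
    exact_mod_cast Nat.factorial_ne_zero (i-1)
  have hΓ1 : Real.Gamma (1+δ) ≠ 0 := (Real.Gamma_pos_of_pos h1δ).ne'
  -- term identification
  have hgC : ∀ m : ℕ,
      (if i + 1 ≤ m then ((m : ℝ) + δ) / (2 + δ) * (bcoef δ i 1) ^ 2 * pk δ m else 0)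
        = C * s m := by
    intro m
    by_cases hm : i + 1 ≤ m
    · have hm0 : m ≠ 0 := by omega
      have hmδ : (0:ℝ) < (m:ℝ) + δ := by
        have h1 : (1:ℝ) ≤ (m:ℝ) := by exact_mod_cast Nat.one_le_iff_ne_zero.mpr hm0
        linarith
      have hGm : Real.Gamma ((m:ℝ)+1+δ) = ((m:ℝ)+δ) * Real.Gamma ((m:ℝ)+δ) := by
        rw [show (m:ℝ)+1+δ = ((m:ℝ)+δ)+1 by ring, Real.Gamma_add_one hmδ.ne']
      have hneg : ((-1:ℝ)^(i-1))^2 = 1 := by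
        rw [← pow_mul, mul_comm, pow_mul]; norm_num
      simp only [if_pos hm, hsdef, bcoef, pk, if_pos hi, if_neg hm0, ht, hC]
      rw [div_pow, mul_pow, hneg, one_mul, mul_pow, hGm]
      have h2δ : (2:ℝ)+δ ≠ 0 := by intro h; linarith [h]
      have hΓm3 : Real.Gamma ((m:ℝ)+3+2*δ) ≠ 0 := (Real.Gamma_pos_of_pos (hx3 m)).ne'
      norm_num only [Nat.cast_one]
      field_simp
    · simp [hsdef, hm]; intro h; omega
  have hgsum : HasSum (fun m : ℕ =>
      if i + 1 ≤ m then ((m : ℝ) + δ) / (2 + δ) * (bcoef δ i 1) ^ 2 * pk δ m else 0)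
      (C * F (i+1)) := by
    rw [show (fun m : ℕ =>
        if i + 1 ≤ m then ((m : ℝ) + δ) / (2 + δ) * (bcoef δ i 1) ^ 2 * pk δ m else 0)
      = (fun m => C * s m) from funext hgC]
    exact hssum.mul_left C
  refine ⟨hgsum.summable, ?_⟩
  rw [hgsum.tsum_eq]
  -- final evaluation
  have e1 : ((i+1:ℕ):ℝ)+1+δ = (i:ℝ)+2+δ := by push_cast; ring
  have e2 : ((i+1:ℕ):ℝ)+2+2*δ = (i:ℝ)+3+2*δ := by push_cast; ring
  have hΓ2 : Real.Gamma (2+δ) = (1+δ) * Real.Gamma (1+δ) := by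
    rw [show (2:ℝ)+δ = (1+δ)+1 by ring, Real.Gamma_add_one h1δ.ne']
  have hΓi3 : Real.Gamma ((i:ℝ)+3+2*δ) ≠ 0 := (Real.Gamma_pos_of_pos (hx3 i)).ne'
  simp only [hF, hC, e1, e2, hΓ2]
  field_simp
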